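/- Let a, d ≥ 2 and b, b' ≥ 1 be integers. Let N (respectively N') be the subgroup of ℤ × ℤ generated by (d−1, 0) and (b, a−1) (respectively (d−1, 0) and (b', a−1)), let G = (ℤ×ℤ)/N and G' = (ℤ×ℤ)/N', let ι : ℤ/(d−1)ℤ → G and ι' : ℤ/(d−1)ℤ → G' be the homomorphisms induced by x ↦ [(x, 0)] (well defined since (d−1, 0) ∈ N and (d−1, 0) ∈ N'), and let π : G → ℤ/(a−1)ℤ and π' : G' → ℤ/(a−1)ℤ be the homomorphisms induced by (x, y) ↦ y mod (a−1). Then there exist group isomorphisms α : ℤ/(d−1)ℤ → ℤ/(d−1)ℤ, β : G → G', and γ : ℤ/(a−1)ℤ → ℤ/(a−1)ℤ with β ∘ ι = ι' ∘ α and π' ∘ β = γ ∘ π if and only if there exist integers z₁ and z₂ such that z₁ mod (d−1) is a unit of ℤ/(d−1)ℤ, z₂ mod (a−1) is a unit of ℤ/(a−1)ℤ, and z₁·b ≡ z₂·b' mod gcd(a−1, d−1). -/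

import Mathlib

lemma mem_closure_special (P B A x y : ℤ) :
    (x, y) ∈ AddSubgroup.closure ({(P, 0), (B, A)} : Set (ℤ × ℤ)) ↔
      ∃ u v : ℤ, x = u * P + v * B ∧ y = v * A := by
  rw [AddSubgroup.mem_closure_pair]
  constructor
  · rintro ⟨u, v, h⟩
    simp only [Prod.smul_mk, smul_eq_mul, Prod.mk_add_mk, Prod.mk.injEq, mul_zero,
      zero_add] at h
    exact ⟨u, v, h.1.symm, h.2.symm⟩
  · rintro ⟨u, v, h1, h2⟩
    exact ⟨u, v, by
      simp only [Prod.smul_mk, smul_eq_mul, Prod.mk_add_mk, Prod.mk.injEq, mul_zero, zero_add]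
      exact ⟨h1.symm, h2.symm⟩⟩

lemma addHom_zmod_apply {k : ℕ} [NeZero k] (f : ZMod k →+ ZMod k) (x : ZMod k) :
    f x = x * f 1 := by
  have hx : ((x.val : ℕ) : ZMod k) = x := ZMod.natCast_rightInverse x
  calc f x = f (x.val • 1) := by rw [nsmul_eq_mul, mul_one, hx]
    _ = x.val • f 1 := by rw [map_nsmul]
    _ = x * f 1 := by rw [nsmul_eq_mul, hx]

/-- Let `a, d ≥ 2` and `b, b' ≥ 1` be integers, let `N` (resp. `N'`) be the
subgroup of `ℤ × ℤ` generated by `(d-1, 0)` and `(b, a-1)` (resp. `(d-1, 0)`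
and `(b', a-1)`), let `G = (ℤ × ℤ)/N` and `G' = (ℤ × ℤ)/N'`, let `ι, ι'` be the
maps `ℤ/(d-1) → G, G'` induced by `x ↦ [(x, 0)]`, and let `π, π'` be the maps
induced by `(x, y) ↦ y mod (a-1)`.  Then there are group isomorphisms
`α : ℤ/(d-1) → ℤ/(d-1)`, `β : G → G'`, `γ : ℤ/(a-1) → ℤ/(a-1)` with
`β ∘ ι = ι' ∘ α` and `π' ∘ β = γ ∘ π` if and only if there are integers
`z₁, z₂` with `z₁ mod (d-1)` a unit of `ℤ/(d-1)`, `z₂ mod (a-1)` a unit of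
`ℤ/(a-1)`, and `z₁ * b ≡ z₂ * b' mod gcd (a-1) (d-1)`. -/
theorem extension_iso_iff_units_mul (a d b b' : ℤ)
    (ha : 2 ≤ a) (hd : 2 ≤ d) (hb : 1 ≤ b) (hb' : 1 ≤ b')
    (N N' : AddSubgroup (ℤ × ℤ))
    (hN : N = AddSubgroup.closure {(d - 1, 0), (b, a - 1)})
    (hN' : N' = AddSubgroup.closure {(d - 1, 0), (b', a - 1)})
    (ι : ZMod (d - 1).toNat →+ (ℤ × ℤ) ⧸ N)
    (hι : ∀ x : ℤ, ι (x : ZMod (d - 1).toNat) = QuotientAddGroup.mk (x, (0 : ℤ)))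
    (ι' : ZMod (d - 1).toNat →+ (ℤ × ℤ) ⧸ N')
    (hι' : ∀ x : ℤ, ι' (x : ZMod (d - 1).toNat) = QuotientAddGroup.mk (x, (0 : ℤ)))
    (π : (ℤ × ℤ) ⧸ N →+ ZMod (a - 1).toNat)
    (hπ : ∀ x y : ℤ, π (QuotientAddGroup.mk (x, y)) = (y : ZMod (a - 1).toNat))
    (π' : (ℤ × ℤ) ⧸ N' →+ ZMod (a - 1).toNat)
    (hπ' : ∀ x y : ℤ, π' (QuotientAddGroup.mk (x, y)) = (y : ZMod (a - 1).toNat)) :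
    (∃ (α : ZMod (d - 1).toNat ≃+ ZMod (d - 1).toNat)
        (β : ((ℤ × ℤ) ⧸ N) ≃+ ((ℤ × ℤ) ⧸ N'))
        (γ : ZMod (a - 1).toNat ≃+ ZMod (a - 1).toNat),
      (∀ x : ZMod (d - 1).toNat, β (ι x) = ι' (α x)) ∧
      (∀ g : (ℤ × ℤ) ⧸ N, π' (β g) = γ (π g))) ↔
    (∃ z₁ z₂ : ℤ, IsUnit (z₁ : ZMod (d - 1).toNat) ∧
      IsUnit (z₂ : ZMod (a - 1).toNat) ∧
      ((z₁ * b : ℤ) : ZMod (Int.gcd (a - 1) (d - 1))) =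
        ((z₂ * b' : ℤ) : ZMod (Int.gcd (a - 1) (d - 1)))) := by
  have hane : a - 1 ≠ 0 := by omega
  have hm1 : (((d - 1).toNat : ℕ) : ℤ) = d - 1 := Int.toNat_of_nonneg (by omega)
  have hn1 : (((a - 1).toNat : ℕ) : ℤ) = a - 1 := Int.toNat_of_nonneg (by omega)
  haveI : NeZero (d - 1).toNat := ⟨by omega⟩
  haveI : NeZero (a - 1).toNat := ⟨by omega⟩
  have hmemN : ∀ x y : ℤ, ((x, y) ∈ N) ↔
      ∃ u v : ℤ, x = u * (d - 1) + v * b ∧ y = v * (a - 1) := by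
    intro x y; rw [hN]; exact mem_closure_special _ _ _ _ _
  have hmemN' : ∀ x y : ℤ, ((x, y) ∈ N') ↔
      ∃ u v : ℤ, x = u * (d - 1) + v * b' ∧ y = v * (a - 1) := by
    intro x y; rw [hN']; exact mem_closure_special _ _ _ _ _
  have hga : ((Int.gcd (a - 1) (d - 1) : ℕ) : ℤ) ∣ (a - 1) := Int.gcd_dvd_left _ _
  have hgd : ((Int.gcd (a - 1) (d - 1) : ℕ) : ℤ) ∣ (d - 1) := Int.gcd_dvd_right _ _
  constructor
  · rintro ⟨α, β, γ, hcom1, hcom2⟩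
    have hαm : ∀ x : ZMod (d - 1).toNat, α x = x * α 1 := fun x => by
      simpa using addHom_zmod_apply α.toAddMonoidHom x
    have hγm : ∀ x : ZMod (a - 1).toNat, γ x = x * γ 1 := fun x => by
      simpa using addHom_zmod_apply γ.toAddMonoidHom x
    obtain ⟨z₁, hz1, hu1⟩ : ∃ z₁ : ℤ, ((z₁ : ℤ) : ZMod (d - 1).toNat) = α 1 ∧
        IsUnit ((z₁ : ℤ) : ZMod (d - 1).toNat) := by
      have hc : ((((α 1).val : ℕ) : ℤ) : ZMod (d - 1).toNat) = α 1 := by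
        push_cast
        exact ZMod.natCast_rightInverse _
      refine ⟨((α 1).val : ℤ), hc, ?_⟩
      rw [hc]
      obtain ⟨y, hy⟩ := α.surjective 1
      exact IsUnit.of_mul_eq_one y (by rw [mul_comm, ← hαm y, hy])
    obtain ⟨z₂, hz2, hu2⟩ : ∃ z₂ : ℤ, ((z₂ : ℤ) : ZMod (a - 1).toNat) = γ 1 ∧
        IsUnit ((z₂ : ℤ) : ZMod (a - 1).toNat) := by
      have hc : ((((γ 1).val : ℕ) : ℤ) : ZMod (a - 1).toNat) = γ 1 := by
        push_cast
        exact ZMod.natCast_rightInverse _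
      refine ⟨((γ 1).val : ℤ), hc, ?_⟩
      rw [hc]
      obtain ⟨y, hy⟩ := γ.surjective 1
      exact IsUnit.of_mul_eq_one y (by rw [mul_comm, ← hγm y, hy])
    refine ⟨z₁, z₂, hu1, hu2, ?_⟩
    obtain ⟨⟨p, q⟩, hpq⟩ :=
      QuotientAddGroup.mk_surjective (β (QuotientAddGroup.mk ((0 : ℤ), (1 : ℤ))))
    have hA : ((q : ℤ) : ZMod (a - 1).toNat) = γ 1 := by
      have h1 := hcom2 (QuotientAddGroup.mk ((0 : ℤ), (1 : ℤ)))
      rw [← hpq, hπ' p q, hπ 0 1, Int.cast_one] at h1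
      exact h1
    have hB : (QuotientAddGroup.mk ((a - 1) * p, (a - 1) * q) : (ℤ × ℤ) ⧸ N') =
        QuotientAddGroup.mk (-(z₁ * b), (0 : ℤ)) := by
      have e0 : (QuotientAddGroup.mk ((a - 1) • ((p, q) : ℤ × ℤ)) : (ℤ × ℤ) ⧸ N') =
          QuotientAddGroup.mk ((a - 1) * p, (a - 1) * q) := by
        congr 1
      rw [← e0, QuotientAddGroup.mk_zsmul (N := N'), hpq, ← map_zsmul]
      have e1 : ((a - 1) • (QuotientAddGroup.mk ((0 : ℤ), (1 : ℤ)) : (ℤ × ℤ) ⧸ N)) =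
          QuotientAddGroup.mk ((-b : ℤ), (0 : ℤ)) := by
        rw [← QuotientAddGroup.mk_zsmul (N := N)]
        refine QuotientAddGroup.eq.mpr ?_
        have e2 : (-((a - 1) • (((0 : ℤ), (1 : ℤ)) : ℤ × ℤ)) + ((-b : ℤ), (0 : ℤ)))
            = ((-b : ℤ), -(a - 1)) := by
          simp [Prod.smul_mk, smul_eq_mul, Prod.ext_iff]
        rw [e2]
        exact (hmemN _ _).mpr ⟨0, -1, by ring, by ring⟩
      rw [e1, ← hι (-b), hcom1]
      have e3 : α ((-b : ℤ) : ZMod (d - 1).toNat) =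
          ((-(z₁ * b) : ℤ) : ZMod (d - 1).toNat) := by
        rw [hαm, ← hz1]
        push_cast
        ring
      rw [e3, hι']
    have hmem := QuotientAddGroup.eq.mp hB
    have hmem2 : ((-((a - 1) * p) + -(z₁ * b), -((a - 1) * q) + 0) : ℤ × ℤ) ∈ N' := hmem
    obtain ⟨u, v, h1, h2⟩ := (hmemN' _ _).mp hmem2
    have hv : v = -q := by
      have hcan : v * (a - 1) = (-q) * (a - 1) := by linear_combination -h2
      exact mul_right_cancel₀ hane hcan
    have hqz : (a - 1) ∣ q - z₂ := by
      have h0 : (((q - z₂ : ℤ)) : ZMod (a - 1).toNat) = 0 := by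
        push_cast
        rw [hA, hz2, sub_self]
      rwa [ZMod.intCast_zmod_eq_zero_iff_dvd, hn1] at h0
    obtain ⟨k, hk⟩ := hqz
    have hfin : ((Int.gcd (a - 1) (d - 1) : ℕ) : ℤ) ∣ z₂ * b' - z₁ * b := by
      rw [hv] at h1
      have key : z₂ * b' - z₁ * b = (p * (a - 1) + u * (d - 1)) - (k * b') * (a - 1) := by
        linear_combination h1 - b' * hk
      rw [key]
      exact dvd_sub (dvd_add (hga.mul_left p) (hgd.mul_left u)) (hga.mul_left (k * b'))
    rw [ZMod.intCast_eq_intCast_iff]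
    exact Int.modEq_iff_dvd.mpr hfin
  · rintro ⟨z₁, z₂, hu1, hu2, hcong⟩
    obtain ⟨w₁, hw₁⟩ : ∃ w₁ : ℤ, (d - 1) ∣ z₁ * w₁ - 1 := by
      obtain ⟨u₁, hu₁e⟩ := hu1
      refine ⟨((((u₁⁻¹ : (ZMod (d - 1).toNat)ˣ) : ZMod (d - 1).toNat)).val : ℤ), ?_⟩
      have h0 : (((z₁ * ((((u₁⁻¹ : (ZMod (d - 1).toNat)ˣ) : ZMod (d - 1).toNat)).val : ℤ) - 1 : ℤ))
          : ZMod (d - 1).toNat) = 0 := by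
        push_cast
        rw [ZMod.natCast_rightInverse _, ← hu₁e, Units.mul_inv, sub_self]
      rwa [ZMod.intCast_zmod_eq_zero_iff_dvd, hm1] at h0
    obtain ⟨w₂, hw₂⟩ : ∃ w₂ : ℤ, (a - 1) ∣ z₂ * w₂ - 1 := by
      obtain ⟨u₂, hu₂e⟩ := hu2
      refine ⟨((((u₂⁻¹ : (ZMod (a - 1).toNat)ˣ) : ZMod (a - 1).toNat)).val : ℤ), ?_⟩
      have h0 : (((z₂ * ((((u₂⁻¹ : (ZMod (a - 1).toNat)ˣ) : ZMod (a - 1).toNat)).val : ℤ) - 1 : ℤ))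
          : ZMod (a - 1).toNat) = 0 := by
        push_cast
        rw [ZMod.natCast_rightInverse _, ← hu₂e, Units.mul_inv, sub_self]
      rwa [ZMod.intCast_zmod_eq_zero_iff_dvd, hn1] at h0
    obtain ⟨k₁, hk₁⟩ := hw₁
    obtain ⟨k₂, hk₂⟩ := hw₂
    obtain ⟨cc, ee, hce⟩ : ∃ cc ee : ℤ, cc * (a - 1) + ee * (d - 1) = z₂ * b' - z₁ * b := by
      have hg : ((Int.gcd (a - 1) (d - 1) : ℕ) : ℤ) ∣ z₂ * b' - z₁ * b :=
        ((ZMod.intCast_eq_intCast_iff _ _ _).mp hcong).dvd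
      obtain ⟨k, hk⟩ := hg
      exact ⟨Int.gcdA (a - 1) (d - 1) * k, Int.gcdB (a - 1) (d - 1) * k, by
        rw [hk, Int.gcd_eq_gcd_ab (a - 1) (d - 1)]; ring⟩
    set f : ℤ × ℤ →+ ℤ × ℤ := AddMonoidHom.mk'
      (fun v => (z₁ * v.1 + cc * v.2, z₂ * v.2)) (by
        rintro ⟨x, y⟩ ⟨x', y'⟩
        simp only [Prod.fst_add, Prod.snd_add, Prod.mk_add_mk, Prod.mk.injEq]
        constructor <;> ring) with hf
    have hker : N ≤ ((QuotientAddGroup.mk' N').comp f).ker := by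
      rw [hN, AddSubgroup.closure_le]
      rintro x hx
      simp only [Set.mem_insert_iff, Set.mem_singleton_iff] at hx
      rcases hx with rfl | rfl
      · refine AddMonoidHom.mem_ker.mpr ?_
        show QuotientAddGroup.mk (f ((d - 1 : ℤ), (0 : ℤ))) = 0
        rw [QuotientAddGroup.eq_zero_iff]
        exact (hmemN' _ _).mpr ⟨z₁, 0, by ring, by ring⟩
      · refine AddMonoidHom.mem_ker.mpr ?_
        show QuotientAddGroup.mk (f ((b : ℤ), (a - 1 : ℤ))) = 0
        rw [QuotientAddGroup.eq_zero_iff]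
        exact (hmemN' _ _).mpr ⟨-ee, z₂, by linear_combination hce, by ring⟩
    set βh := QuotientAddGroup.lift N ((QuotientAddGroup.mk' N').comp f) hker with hβh
    have hβmk : ∀ x y : ℤ, βh (QuotientAddGroup.mk (x, y)) =
        QuotientAddGroup.mk (z₁ * x + cc * y, z₂ * y) := fun x y => rfl
    have hsurj : Function.Surjective βh := by
      intro g'
      obtain ⟨⟨uu, vv⟩, rfl⟩ := QuotientAddGroup.mk_surjective g'
      refine ⟨QuotientAddGroup.mk (w₁ * (uu + (k₂ * vv) * b' - cc * (w₂ * vv)), w₂ * vv), ?_⟩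
      rw [hβmk]
      refine QuotientAddGroup.eq.mpr ?_
      have hmem2 : ((-(z₁ * (w₁ * (uu + (k₂ * vv) * b' - cc * (w₂ * vv))) + cc * (w₂ * vv)) + uu,
          -(z₂ * (w₂ * vv)) + vv) : ℤ × ℤ) ∈ N' := by
        refine (hmemN' _ _).mpr ⟨-(k₁ * (uu + (k₂ * vv) * b' - cc * (w₂ * vv))), -(k₂ * vv), ?_, ?_⟩
        · linear_combination (-(uu + (k₂ * vv) * b' - cc * (w₂ * vv))) * hk₁
        · linear_combination (-vv) * hk₂
      exact hmem2
    have hinj : Function.Injective βh := by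
      rw [injective_iff_map_eq_zero]
      intro g hg
      obtain ⟨⟨x, y⟩, rfl⟩ := QuotientAddGroup.mk_surjective g
      rw [hβmk, QuotientAddGroup.eq_zero_iff] at hg
      obtain ⟨s, t, h1, h2⟩ := (hmemN' _ _).mp hg
      rw [QuotientAddGroup.eq_zero_iff]
      have hy : y = (a - 1) * (w₂ * t - k₂ * y) := by
        linear_combination w₂ * h2 - y * hk₂
      have ht : t = z₂ * (w₂ * t - k₂ * y) := by
        have hcan : t * (a - 1) = (z₂ * (w₂ * t - k₂ * y)) * (a - 1) := by
          linear_combination z₂ * hy - h2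
        exact mul_right_cancel₀ hane hcan
      have hx1 : z₁ * x = (d - 1) * (s + ee * (w₂ * t - k₂ * y)) +
          z₁ * b * (w₂ * t - k₂ * y) := by
        linear_combination h1 + b' * ht - cc * hy - (w₂ * t - k₂ * y) * hce
      refine (hmemN _ _).mpr ⟨w₁ * (s + ee * (w₂ * t - k₂ * y)) +
        k₁ * b * (w₂ * t - k₂ * y) - k₁ * x, w₂ * t - k₂ * y, ?_, ?_⟩
      · linear_combination w₁ * hx1 + (b * (w₂ * t - k₂ * y) - x) * hk₁
      · linear_combination hy
    refine ⟨AddAut.mulLeft hu1.unit, AddEquiv.ofBijective βh ⟨hinj, hsurj⟩,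
      AddAut.mulLeft hu2.unit, ?_, ?_⟩
    · intro x
      obtain ⟨xz, rfl⟩ := ZMod.intCast_surjective x
      rw [hι xz]
      have e0 : (AddEquiv.ofBijective βh ⟨hinj, hsurj⟩) (QuotientAddGroup.mk (xz, (0 : ℤ))) =
          βh (QuotientAddGroup.mk (xz, (0 : ℤ))) := rfl
      rw [e0, hβmk]
      have hαx : (AddAut.mulLeft hu1.unit) ((xz : ℤ) : ZMod (d - 1).toNat) =
          (((z₁ * xz : ℤ)) : ZMod (d - 1).toNat) := by
        show (hu1.unit : ZMod (d - 1).toNat) * _ = _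
        rw [IsUnit.unit_spec]
        push_cast
        ring
      erw [hαx, hι']
      norm_num
    · intro g
      obtain ⟨⟨x, y⟩, rfl⟩ := QuotientAddGroup.mk_surjective g
      have e0 : (AddEquiv.ofBijective βh ⟨hinj, hsurj⟩) (QuotientAddGroup.mk (x, y)) =
          βh (QuotientAddGroup.mk (x, y)) := rfl
      rw [e0, hβmk, hπ', hπ]
      show _ = (hu2.unit : ZMod (a - 1).toNat) * _
      rw [IsUnit.unit_spec]
      push_cast
      ring
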